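/- Let ⪰ be a binary relation on a closed, mixture-closed set C of Anscombe–Aumann acts satisfying extended mixture cancellation and having closed graph, and let D⁺ = {a − b : a, b ∈ C and a ⪰ b}. For any vector w ∈ ℝ^{S×O} such that w·d ≥ 0 for every d ∈ D⁺, the relation ⪰_w on C defined by a ⪰_w b iff w·(a − b) ≥ 0 is a complete binary relation on C that extends ⪰ (a ⪰ b implies a ⪰_w b), satisfies extended mixture cancellation, and has closed graph. -/

import Mathlib

/-- An Anscombe–Aumann act: a map assigning to each state a probability vector over outcomes. -/
def IsAAAct {S O : Type*} [Fintype O] (a : S → O → ℝ) : Prop :=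
  ∀ s, (∀ o, 0 ≤ a s o) ∧ (∑ o, a s o = 1)

/-- Extended mixture cancellation for a relation on a subset of a real vector space. -/
def ExtMixCancel {V : Type*} [AddCommGroup V] [Module ℝ V]
    (C : Set V) (R : V → V → Prop) : Prop :=
  ∀ (n : ℕ) (a b : Fin (n + 1) → V),
    (∀ i, a i ∈ C) → (∀ i, b i ∈ C) →
    (∑ i, a i = ∑ i, b i) →
    (∃ k, k ≤ n ∧ (∀ i : Fin (n + 1), (i : ℕ) < k → R (a i) (b i)) ∧
      (∀ i : Fin (n + 1), k ≤ (i : ℕ) → a i = a (Fin.last n) ∧ b i = b (Fin.last n))) →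
    R (b (Fin.last n)) (a (Fin.last n))

/-- The graph `{(a, b) ∈ C × C : a ⪰ b}` is closed. -/
def ClosedGraphOn {V : Type*} [TopologicalSpace V] (C : Set V) (R : V → V → Prop) : Prop :=
  IsClosed {p : V × V | p.1 ∈ C ∧ p.2 ∈ C ∧ R p.1 p.2}

/-- `D⁺ = {a - b : a, b ∈ C and a ⪰ b}`. -/
def Dplus {V : Type*} [AddCommGroup V] (C : Set V) (R : V → V → Prop) : Set V :=
  {x | ∃ a ∈ C, ∃ b ∈ C, R a b ∧ x = a - b}

/-- The standard inner product on `ℝ^{S×O}`. -/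
def dotSO {S O : Type*} [Fintype S] [Fintype O] (w x : S → O → ℝ) : ℝ :=
  ∑ s, ∑ o, w s o * x s o

lemma dotSO_sub {S O : Type*} [Fintype S] [Fintype O] (w x y : S → O → ℝ) :
    dotSO w (x - y) = dotSO w x - dotSO w y := by
  simp [dotSO, Pi.sub_apply, mul_sub, Finset.sum_sub_distrib]

lemma dotSO_sum {S O ι : Type*} [Fintype S] [Fintype O] (w : S → O → ℝ)
    (t : Finset ι) (f : ι → S → O → ℝ) :
    dotSO w (∑ i ∈ t, f i) = ∑ i ∈ t, dotSO w (f i) := by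
  classical
  induction t using Finset.induction with
  | empty => simp [dotSO]
  | @insert _ _ h ih =>
    rw [Finset.sum_insert h, Finset.sum_insert h, ← ih]
    simp [dotSO, Pi.add_apply, mul_add, Finset.sum_add_distrib]

lemma dotSO_cont {S O : Type*} [Fintype S] [Fintype O] (w : S → O → ℝ) :
    Continuous (fun p : (S → O → ℝ) × (S → O → ℝ) => dotSO w (p.1 - p.2)) := by
  unfold dotSO
  apply continuous_finset_sum; intro s _
  apply continuous_finset_sum; intro o _
  simp only [Pi.sub_apply]
  exact continuous_const.mul (by fun_prop)

/-- For any `w` nonnegative on `D⁺`, the half-space relation `a ⪰_w b ↔ w·(a−b) ≥ 0`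
is a complete extension of `⪰` satisfying extended mixture cancellation with closed graph. -/
theorem halfspace_relation_properties
    {S O : Type*} [Fintype S] [Fintype O] [Nonempty S] [Nonempty O]
    (C : Set (S → O → ℝ)) (R : (S → O → ℝ) → (S → O → ℝ) → Prop)
    (hAA : ∀ a ∈ C, IsAAAct a)
    (hclosedC : IsClosed C)
    (hmix : ∀ a ∈ C, ∀ b ∈ C, ∀ r : ℝ, 0 ≤ r → r ≤ 1 → r • a + (1 - r) • b ∈ C)
    (hcancel : ExtMixCancel C R)
    (hgraph : ClosedGraphOn C R)
    (w : S → O → ℝ)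
    (hw : ∀ d ∈ Dplus C R, 0 ≤ dotSO w d) :
    (∀ a ∈ C, ∀ b ∈ C, (0 ≤ dotSO w (a - b)) ∨ (0 ≤ dotSO w (b - a))) ∧
    (∀ a ∈ C, ∀ b ∈ C, R a b → 0 ≤ dotSO w (a - b)) ∧
    ExtMixCancel C (fun a b => 0 ≤ dotSO w (a - b)) ∧
    ClosedGraphOn C (fun a b => 0 ≤ dotSO w (a - b)) := by
  refine ⟨?_, ?_, ?_, ?_⟩
  · intro a _ b _
    have h := dotSO_sub w a b
    have h' := dotSO_sub w b a
    rcases le_or_gt 0 (dotSO w (a - b)) with h1 | h1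
    · exact Or.inl h1
    · right; linarith
  · intro a ha b hb hab
    exact hw _ ⟨a, ha, b, hb, hab, rfl⟩
  · intro n a b _ _ hsum ⟨k, hk, h1, h2⟩
    set f : Fin (n + 1) → ℝ := fun i => dotSO w (a i - b i) with hf
    have hfsum : ∑ i, f i = 0 := by
      simp only [hf, dotSO_sub]
      rw [Finset.sum_sub_distrib, ← dotSO_sum, ← dotSO_sum, hsum, sub_self]
    by_contra hc
    push_neg at hc
    rw [dotSO_sub] at hc
    have hcpos : 0 < f (Fin.last n) := by
      simp only [hf, dotSO_sub]; linarith
    have hnonneg : ∀ i ∈ Finset.univ, 0 ≤ f i := by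
      intro i _
      rcases lt_or_ge (i : ℕ) k with hik | hik
      · exact h1 i hik
      · obtain ⟨ha', hb'⟩ := h2 i hik
        rw [hf]; simp only [ha', hb']; exact le_of_lt hcpos
    have := (Finset.sum_eq_zero_iff_of_nonneg hnonneg).mp hfsum (Fin.last n)
      (Finset.mem_univ _)
    linarith
  · have hset : {p : (S → O → ℝ) × (S → O → ℝ) |
        p.1 ∈ C ∧ p.2 ∈ C ∧ 0 ≤ dotSO w (p.1 - p.2)} =
        (Prod.fst ⁻¹' C) ∩ ((Prod.snd ⁻¹' C) ∩
          {p | 0 ≤ dotSO w (p.1 - p.2)}) := by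
      ext p; constructor <;> (intro h; exact ⟨h.1, h.2.1, h.2.2⟩)
    rw [ClosedGraphOn, hset]
    exact (hclosedC.preimage continuous_fst).inter
      ((hclosedC.preimage continuous_snd).inter
        (isClosed_le continuous_const (dotSO_cont w)))
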